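/- Let α > 0, Φ > 0, γ > 1, t₀ ∈ ℝ, and P₀ > 0, and set T_c = t₀ + P₀^γ / (γ · α · Φ^γ). Suppose P : ℝ → ℝ is continuous on [t₀, T_c], differentiable on [t₀, T_c), satisfies P(t₀) = P₀, P(t) > 0 and P'(t) = -α · Φ^γ · P(t)^(1-γ) for all t ∈ [t₀, T_c). Then P is strictly decreasing on [t₀, T_c] and P(T_c) = 0. -/

import Mathlib

/-- If P is continuous on [t₀, T_c], differentiable on [t₀, T_c)
with P' = -α·Φ^γ·P^(1-γ) and P > 0 there, and P(t₀) = P₀ > 0, where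
T_c = t₀ + P₀^γ/(γ·α·Φ^γ), then P is strictly decreasing on [t₀, T_c] and
P(T_c) = 0.  Powers are rpow. -/
theorem subcritical_solution_hits_zero (α Φ γ t₀ P₀ : ℝ) (P : ℝ → ℝ)
    (hα : 0 < α) (hΦ : 0 < Φ) (hγ : 1 < γ) (hP₀ : 0 < P₀) :
    let Tc : ℝ := t₀ + P₀ ^ γ / (γ * α * Φ ^ γ)
    ContinuousOn P (Set.Icc t₀ Tc) →
    P t₀ = P₀ →
    (∀ t ∈ Set.Ico t₀ Tc, 0 < P t) →
    (∀ t ∈ Set.Ico t₀ Tc, HasDerivAt P (-α * Φ ^ γ * P t ^ (1 - γ)) t) →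
    StrictAntiOn P (Set.Icc t₀ Tc) ∧ P Tc = 0 := by
  intro Tc hcont hP0 hpos hderiv
  have hγ0 : (0:ℝ) < γ := lt_trans one_pos hγ
  have hΦγ : (0:ℝ) < Φ ^ γ := Real.rpow_pos_of_pos hΦ γ
  set C : ℝ := γ * α * Φ ^ γ with hC
  have hCpos : 0 < C := by positivity
  have hP₀γ : (0:ℝ) < P₀ ^ γ := Real.rpow_pos_of_pos hP₀ γ
  have hTc : t₀ < Tc := by
    have : 0 < P₀ ^ γ / C := div_pos hP₀γ hCpos
    simp only [Tc]; linarith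
  have hCTc : C * (Tc - t₀) = P₀ ^ γ := by
    have : Tc - t₀ = P₀ ^ γ / C := by simp [Tc, hC]
    rw [this, mul_div_cancel₀ _ (ne_of_gt hCpos)]
  -- key identity
  have key : ∀ t ∈ Set.Icc t₀ Tc, P t ^ γ + C * (t - t₀) = P₀ ^ γ := by
    have hc2 : ContinuousOn (fun t => P t ^ γ + C * (t - t₀)) (Set.Icc t₀ Tc) := by
      apply ContinuousOn.add
      · exact hcont.rpow_const (fun x hx => Or.inr (le_of_lt hγ0))
      · exact (continuous_const.mul (continuous_id.sub continuous_const)).continuousOn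
    have hd2 : ∀ x ∈ Set.Ico t₀ Tc,
        HasDerivWithinAt (fun t => P t ^ γ + C * (t - t₀)) 0 (Set.Ici x) x := by
      intro x hx
      have hpx := hpos x hx
      have h1 : HasDerivAt (fun t => P t ^ γ)
          (γ * P x ^ (γ - 1) * (-α * Φ ^ γ * P x ^ (1 - γ))) x := by
        have := (Real.hasDerivAt_rpow_const (p := γ) (Or.inl (ne_of_gt hpx))).comp x (hderiv x hx)
        simpa [mul_comm, Function.comp_def] using this
      have heq : γ * P x ^ (γ - 1) * (-α * Φ ^ γ * P x ^ (1 - γ)) = -C := by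
        have : P x ^ (γ - 1) * P x ^ (1 - γ) = 1 := by
          rw [← Real.rpow_add hpx]; norm_num
        rw [hC]
        linear_combination (-(γ * α * Φ ^ γ)) * this
      have h2 : HasDerivAt (fun t => C * (t - t₀)) C x := by
        simpa using (hasDerivAt_id x).sub_const t₀ |>.const_mul C
      have := (h1.add h2)
      rw [heq] at this
      simpa [Pi.add_def] using this.hasDerivWithinAt
    have := constant_of_has_deriv_right_zero hc2 hd2
    intro t ht
    have h := this t ht
    simpa [hP0] using h
  have hPTc0 : P Tc ^ γ = 0 := by
    have h := key Tc (Set.right_mem_Icc.mpr (le_of_lt hTc))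
    rw [hCTc] at h; linarith
  have hPTcnn : 0 ≤ P Tc := by
    have hcw : ContinuousWithinAt P (Set.Ico t₀ Tc) Tc :=
      (hcont Tc (Set.right_mem_Icc.mpr hTc.le)).mono
        (fun x hx => ⟨hx.1, hx.2.le⟩)
    have hne : (nhdsWithin Tc (Set.Ico t₀ Tc)).NeBot := by
      apply mem_closure_iff_nhdsWithin_neBot.mp
      rw [closure_Ico (ne_of_lt hTc)]
      exact Set.right_mem_Icc.mpr hTc.le
    exact ge_of_tendsto hcw (eventually_nhdsWithin_of_forall (fun x hx => (hpos x hx).le))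
  have hPTc : P Tc = 0 := by
    by_contra h
    have := Real.rpow_natCast -- dummy
    have hp : 0 < P Tc := lt_of_le_of_ne hPTcnn (Ne.symm h)
    exact absurd hPTc0 (ne_of_gt (Real.rpow_pos_of_pos hp γ))
  refine ⟨?_, hPTc⟩
  intro x hx y hy hxy
  have hxIco : x ∈ Set.Ico t₀ Tc := ⟨hx.1, lt_of_lt_of_le hxy hy.2⟩
  have hpx := hpos x hxIco
  have hpy : 0 ≤ P y := by
    rcases eq_or_lt_of_le hy.2 with h | h
    · rw [h]; exact hPTcnn
    · exact (hpos y ⟨hy.1, h⟩).le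
  have hkx := key x hx
  have hky := key y hy
  by_contra hcon
  push_neg at hcon
  have : P x ^ γ ≤ P y ^ γ := Real.rpow_le_rpow hpx.le hcon hγ0.le
  nlinarith [mul_lt_mul_of_pos_left (sub_lt_sub_right hxy t₀) hCpos]
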